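/- In the Siegel upper half-space over a real closed field F, with Lagrangians labeled 0, Z, X, l_∞ (Z, X symmetric matrices, l_∞ the span of the first n standard basis vectors and 0 the span of the last n), assuming pairwise transversality, the crossratio R(0, Z, X, l_∞) equals Z^{-1}X. -/

import Mathlib

open Matrix

/-- The linear embedding `F^n → F^(2n)` whose image is the column span of the block
matrix `(M; Id)` (the Lagrangian parametrized by the symmetric matrix `M`). -/
def colMap {F : Type*} [CommRing F] {n : ℕ} (M : Matrix (Fin n) (Fin n) F) :
    (Fin n → F) →ₗ[F] ((Fin n ⊕ Fin n) → F) where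
  toFun v := Sum.elim (M.mulVec v) v
  map_add' u v := by
    funext x
    cases x <;> simp [Matrix.mulVec_add]
  map_smul' c v := by
    funext x
    cases x <;> simp [Matrix.mulVec_smul]

/-- The linear embedding `F^n → F^(2n)` whose image is the Lagrangian `l_∞`, the span of
the first `n` standard basis vectors. -/
def inftyMap (F : Type*) [CommRing F] (n : ℕ) :
    (Fin n → F) →ₗ[F] ((Fin n ⊕ Fin n) → F) where
  toFun v := Sum.elim v 0
  map_add' u v := by
    funext x
    cases x <;> simp
  map_smul' c v := by
    funext x
    cases x <;> simp

/-- In the chart of the Siegel space with Lagrangians labeled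
`0, Z, X, l_∞` (`Z`, `X` symmetric), assuming pairwise transversality, the crossratio
`R(0, Z, X, l_∞) = p_0^{∥Z} ∘ p_{l_∞}^{∥X}|_0` equals `Z⁻¹ * X` in the coordinates of the
Lagrangian `0`. -/
theorem crossratio_chart_formula (F : Type*) [Field F] [LinearOrder F] [IsStrictOrderedRing F] (n : ℕ)
    (Z X : Matrix (Fin n) (Fin n) F) (hZs : Zᵀ = Z) (hXs : Xᵀ = X)
    (hZ : IsUnit Z.det) (hX : IsUnit X.det) (hZX : IsUnit (Z - X).det)
    (p q : ((Fin n ⊕ Fin n) → F) →ₗ[F] ((Fin n ⊕ Fin n) → F))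
    (hp : LinearMap.IsProj (LinearMap.range (colMap (0 : Matrix (Fin n) (Fin n) F))) p)
    (hpker : LinearMap.ker p = LinearMap.range (colMap Z))
    (hq : LinearMap.IsProj (LinearMap.range (inftyMap F n)) q)
    (hqker : LinearMap.ker q = LinearMap.range (colMap X)) :
    ∀ v : Fin n → F,
      p (q (colMap (0 : Matrix (Fin n) (Fin n) F) v)) =
        colMap (0 : Matrix (Fin n) (Fin n) F) ((Z⁻¹ * X).mulVec v) := by
  intro v
  -- decompose colMap 0 v = inftyMap (-X *ᵥ v) + colMap X v
  have hdecomp1 : colMap (0 : Matrix (Fin n) (Fin n) F) v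
      = inftyMap F n (-(X.mulVec v)) + colMap X v := by
    funext x
    cases x <;> simp [colMap, inftyMap]
  have hqX : q (colMap X v) = 0 := by
    have : colMap X v ∈ LinearMap.ker q := by
      rw [hqker]; exact ⟨v, rfl⟩
    simpa using this
  have hqinf : q (inftyMap F n (-(X.mulVec v))) = inftyMap F n (-(X.mulVec v)) :=
    hq.map_id _ ⟨_, rfl⟩
  have hq1 : q (colMap (0 : Matrix (Fin n) (Fin n) F) v) = inftyMap F n (-(X.mulVec v)) := by
    rw [hdecomp1, map_add, hqX, hqinf, add_zero]
  -- decompose inftyMap (-Xv) = colMap 0 (Z⁻¹Xv) + colMap Z (-(Z⁻¹Xv))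
  have hZZ : Z.mulVec ((Z⁻¹ * X).mulVec v) = X.mulVec v := by
    rw [Matrix.mulVec_mulVec, ← Matrix.mul_assoc, Matrix.mul_nonsing_inv Z hZ, Matrix.one_mul]
  have hdecomp2 : inftyMap F n (-(X.mulVec v))
      = colMap (0 : Matrix (Fin n) (Fin n) F) ((Z⁻¹ * X).mulVec v)
        + colMap Z (-((Z⁻¹ * X).mulVec v)) := by
    funext x
    cases x with
    | inl i => simp [colMap, inftyMap, Matrix.mulVec_neg, hZZ]
    | inr i => simp [colMap, inftyMap]
  have hpZ : p (colMap Z (-((Z⁻¹ * X).mulVec v))) = 0 := by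
    have : colMap Z (-((Z⁻¹ * X).mulVec v)) ∈ LinearMap.ker p := by
      rw [hpker]; exact ⟨_, rfl⟩
    simpa using this
  have hp0 : p (colMap (0 : Matrix (Fin n) (Fin n) F) ((Z⁻¹ * X).mulVec v))
      = colMap (0 : Matrix (Fin n) (Fin n) F) ((Z⁻¹ * X).mulVec v) :=
    hp.map_id _ ⟨_, rfl⟩
  rw [hq1, hdecomp2, map_add, hpZ, hp0, add_zero]
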